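/- For the neutral Moran process on a population of size N and 1 ≤ i ≤ N-1, the mean conditional fixation time at state N starting from i equals t_i^N = (N(N-i)/i)[N(H_{N-1} - H_{N-i}) + 1]. -/

import Mathlib

open Real Finset

noncomputable def H (n : ℕ) : ℝ := ∑ i ∈ Finset.Icc 1 n, (1 : ℝ) / i

lemma H_succ (n : ℕ) : H (n+1) = H n + 1/((n:ℝ)+1) := by
  unfold H
  rw [Finset.sum_Icc_succ_top (by omega)]
  push_cast; ring

lemma moran_inner_sum (N k : ℕ) (hk : k + 1 ≤ N) :
    ∑ n ∈ Finset.Icc 1 k, ((n : ℝ) / N) / (((n : ℝ) * ((N : ℝ) - n)) / (N : ℝ) ^ 2)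
      = (N:ℝ) * (H (N-1) - H (N-1-k)) := by
  induction k with
  | zero => simp
  | succ k ih =>
    rw [Finset.sum_Icc_succ_top (by omega), ih (by omega)]
    have h1 : N - 1 - k = (N - 1 - (k+1)) + 1 := by omega
    rw [h1, H_succ]
    have h2 : ((N - 1 - (k+1) : ℕ) : ℝ) = (N:ℝ) - (k:ℝ) - 2 := by
      rw [Nat.cast_sub (by omega), Nat.cast_sub (by omega)]
      push_cast; ring
    rw [h2]
    have hN : (k:ℝ) + 2 ≤ (N:ℝ) := by exact_mod_cast hk
    have h3 : (N:ℝ) - (k:ℝ) - 2 + 1 ≠ 0 := by intro h; nlinarith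
    have h4 : (N:ℝ) ≠ 0 := Nat.cast_ne_zero.mpr (by omega)
    have h5 : ((k:ℝ) + 1) ≠ 0 := by positivity
    have h6 : (N:ℝ) - ((k:ℕ)+1 : ℕ) ≠ 0 := by push_cast; intro h; nlinarith
    push_cast at h6 ⊢
    field_simp
    ring

lemma moran_outer_sum (N d : ℕ) (hd : d ≤ N - 1) :
    ∑ k ∈ Finset.Icc (N-d) (N-1), (N:ℝ) * (H (N-1) - H (N-1-k))
      = (N:ℝ) * d * (H (N-1) - H d + 1) := by
  induction d with
  | zero =>
    rcases Nat.eq_zero_or_pos N with h | h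
    · subst h; simp
    · rw [Finset.Icc_eq_empty (by omega)]; simp
  | succ d ih =>
    have hN : d + 2 ≤ N := by omega
    have e1 : Finset.Icc (N-(d+1)) (N-1) = insert (N-(d+1)) (Finset.Ioc (N-(d+1)) (N-1)) := by
      rw [Finset.Ioc_insert_left (by omega)]
    have e2 : Finset.Ioc (N-(d+1)) (N-1) = Finset.Icc (N-d) (N-1) := by
      rw [← Finset.Icc_add_one_left_eq_Ioc]; congr 1; omega
    rw [e1, Finset.sum_insert Finset.left_notMem_Ioc, e2, ih (by omega)]
    have e3 : N - 1 - (N-(d+1)) = d := by omega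
    rw [e3, H_succ]
    have h5 : ((d:ℝ) + 1) ≠ 0 := by positivity
    push_cast
    field_simp
    ring

theorem neutral_tiN (N i : ℕ) (hi1 : 1 ≤ i) (hiN : i ≤ N - 1) :
    (1 / ((i : ℝ) / N)) *
        (∑ k ∈ Finset.Icc i (N - 1), ∑ n ∈ Finset.Icc 1 k,
          ((n : ℝ) / N) / (((n : ℝ) * ((N : ℝ) - n)) / (N : ℝ) ^ 2))
      - ((1 - (i : ℝ) / N) / ((i : ℝ) / N)) * (N * ((N : ℝ) - 1))
      = ((N : ℝ) * ((N : ℝ) - i) / i) * ((N : ℝ) * (H (N - 1) - H (N - i)) + 1) := by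
  have hN2 : 2 ≤ N := by omega
  have e0 : ∑ k ∈ Finset.Icc i (N - 1), ∑ n ∈ Finset.Icc 1 k,
      ((n : ℝ) / N) / (((n : ℝ) * ((N : ℝ) - n)) / (N : ℝ) ^ 2)
      = ∑ k ∈ Finset.Icc i (N-1), (N:ℝ) * (H (N-1) - H (N-1-k)) := by
    refine Finset.sum_congr rfl fun k hk => ?_
    rw [Finset.mem_Icc] at hk
    exact moran_inner_sum N k (by omega)
  have e1 : Finset.Icc i (N-1) = Finset.Icc (N-(N-i)) (N-1) := by congr 1; omega
  rw [e0, e1, moran_outer_sum N (N-i) (by omega)]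
  have hc : ((N - i : ℕ) : ℝ) = (N:ℝ) - i := by
    rw [Nat.cast_sub (by omega)]
  rw [hc]
  have hi0 : (i:ℝ) ≠ 0 := Nat.cast_ne_zero.mpr (by omega)
  have hN0 : (N:ℝ) ≠ 0 := Nat.cast_ne_zero.mpr (by omega)
  field_simp
  ring
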